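/- Let G be a connected graph of order n > 3 with m edges. If G has a cut vertex, then tmc(G) = m − n + 2 + l(G). -/

import Mathlib

open SimpleGraph

/-- A walk in a total-colored graph is *total monochromatic* if all of its edges and
internal vertices have the same color. -/
def IsTotalMonoWalk {V : Type*} {G : SimpleGraph V} (ce : Sym2 V → ℕ) (cv : V → ℕ)
    {u v : V} (w : G.Walk u v) : Prop :=
  ∃ c, (∀ e ∈ w.edges, ce e = c) ∧ ∀ x ∈ w.support.tail.dropLast, cv x = c

/-- A total coloring (edge coloring `ce`, vertex coloring `cv`) of `G` is a
*TMC-coloring* if any two vertices are connected by a total monochromatic path. -/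
def IsTMCColoring {V : Type*} (G : SimpleGraph V) (ce : Sym2 V → ℕ) (cv : V → ℕ) : Prop :=
  ∀ u v : V, u ≠ v → ∃ w : G.Walk u v, w.IsPath ∧ IsTotalMonoWalk ce cv w

/-- The number of colors used by a total coloring of `G`:
colors appearing on edges of `G` together with colors appearing on vertices. -/
noncomputable def colorsUsed {V : Type*} (G : SimpleGraph V) (ce : Sym2 V → ℕ) (cv : V → ℕ) : ℕ :=
  (ce '' G.edgeSet ∪ Set.range cv).ncard

/-- The total monochromatic connection number `tmc G`: the maximum number of colors
used in a TMC-coloring of `G`. -/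
noncomputable def tmc {V : Type*} [Fintype V] (G : SimpleGraph V) : ℕ :=
  sSup {k | ∃ ce cv, IsTMCColoring G ce cv ∧ colorsUsed G ce cv = k}

/-- The number of leaves (vertices of degree one) of a graph. -/
noncomputable def numLeaves {V : Type*} (T : SimpleGraph V) : ℕ :=
  {v : V | (T.neighborSet v).ncard = 1}.ncard

/-- `maxLeaves G` is the maximum number of leaves over all spanning trees of `G`. -/
noncomputable def maxLeaves {V : Type*} [Fintype V] (G : SimpleGraph V) : ℕ :=
  sSup {k | ∃ T : SimpleGraph V, T ≤ G ∧ T.IsTree ∧ numLeaves T = k}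

section Helpers

variable {V : Type*} {G : SimpleGraph V}

lemma list_mem_dropLast {α : Type*} {l : List α} {x : α} (hl : l ≠ [])
    (hx : x ∈ l) (hlast : x ≠ l.getLast hl) : x ∈ l.dropLast := by
  conv at hx => rw [← List.dropLast_append_getLast hl]
  rcases List.mem_append.1 hx with h | h
  · exact h
  · simp only [List.mem_singleton] at h; exact absurd h hlast

lemma list_getLast_not_mem_dropLast {α : Type*} {l : List α} (hl : l ≠ [])
    (hnd : l.Nodup) : l.getLast hl ∉ l.dropLast := by
  intro hmem
  have := List.dropLast_append_getLast hl
  rw [← this] at hnd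
  exact (List.disjoint_of_nodup_append hnd) hmem (List.mem_singleton.2 rfl)

lemma support_tail_getLast {u w : V} (p : G.Walk u w) (hne : p.support.tail ≠ []) :
    p.support.tail.getLast hne = w := by
  cases p with
  | nil => simp at hne
  | cons h q =>
    have : (Walk.cons h q).support.tail = q.support := by simp
    rw [List.getLast_congr _ _ this]
    exact q.getLast_support

/-- direction A: a support vertex distinct from both endpoints is internal. -/
lemma mem_internal_of {u w x : V} (p : G.Walk u w) (hx : x ∈ p.support)
    (hxu : x ≠ u) (hxw : x ≠ w) : x ∈ p.support.tail.dropLast := by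
  have hxt : x ∈ p.support.tail := by
    rw [p.support_eq_cons] at hx
    rcases List.mem_cons.1 hx with h | h
    · exact absurd h hxu
    · exact h
  have hne : p.support.tail ≠ [] := List.ne_nil_of_mem hxt
  exact list_mem_dropLast hne hxt (by rw [support_tail_getLast p hne]; exact hxw)

/-- direction B: an internal vertex of a path is in the support and differs
from both endpoints. -/
lemma internal_spec {u w x : V} {p : G.Walk u w} (hp : p.IsPath)
    (hx : x ∈ p.support.tail.dropLast) :
    x ∈ p.support ∧ x ≠ u ∧ x ≠ w := by
  have hxt : x ∈ p.support.tail := List.dropLast_subset _ hx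
  have hnd := hp.support_nodup
  have hsupp : x ∈ p.support := by
    rw [p.support_eq_cons]; exact List.mem_cons_of_mem _ hxt
  have hndt : p.support.tail.Nodup ∧ u ∉ p.support.tail := by
    rw [p.support_eq_cons] at hnd
    exact ⟨hnd.of_cons, (List.nodup_cons.1 hnd).1⟩
  refine ⟨hsupp, fun h => hndt.2 (h ▸ hxt), ?_⟩
  have hne : p.support.tail ≠ [] := List.ne_nil_of_mem hxt
  have h2 := list_getLast_not_mem_dropLast hne hndt.1
  rw [support_tail_getLast p hne] at h2
  intro hxe
  rw [hxe] at hx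
  exact h2 hx

/-- an internal vertex of a path has two distinct neighbors. -/
lemma internal_two_neighbors {u w x : V} {p : G.Walk u w} (hp : p.IsPath)
    (hx : x ∈ p.support.tail.dropLast) :
    ∃ y z, y ≠ z ∧ G.Adj x y ∧ G.Adj x z := by
  obtain ⟨hsupp, hxu, hxw⟩ := internal_spec hp hx
  obtain ⟨q, r, rfl⟩ := Walk.mem_support_iff_exists_append.1 hsupp
  obtain ⟨z', hadjz, r', rfl⟩ := Walk.exists_eq_cons_of_ne hxw r
  obtain ⟨y', hadjy, q'', hq⟩ := Walk.exists_eq_cons_of_ne hxu q.reverse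
  refine ⟨y', z', ?_, hadjy, hadjz⟩
  have hy : y' ∈ q.support := by
    have : y' ∈ q.reverse.support := by rw [hq]; simp [Walk.support_cons]
    rwa [Walk.support_reverse, List.mem_reverse] at this
  have hz : z' ∈ (Walk.cons hadjz r').support.tail := by simp [Walk.support_cons]
  have hnd := hp.support_nodup
  rw [Walk.support_append] at hnd
  intro hyz
  exact (List.disjoint_of_nodup_append hnd) hy (hyz ▸ hz)

lemma internal_not_leaf [Finite V] {u w x : V} {p : G.Walk u w} (hp : p.IsPath)
    (hx : x ∈ p.support.tail.dropLast) : (G.neighborSet x).ncard ≠ 1 := by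
  obtain ⟨y, z, hyz, hy, hz⟩ := internal_two_neighbors hp hx
  have : 1 < (G.neighborSet x).ncard := by
    rw [Set.one_lt_ncard (Set.toFinite _)]
    exact ⟨y, hy, z, hz, hyz⟩
  omega

lemma lift_reach {s : Set V} : ∀ {x y : V} (p : G.Walk x y)
    (hp : ∀ z ∈ p.support, z ∈ s),
    (G.induce s).Reachable ⟨x, hp x p.start_mem_support⟩ ⟨y, hp y p.end_mem_support⟩ := by
  intro x y p
  induction p with
  | nil => intro hp; exact Reachable.refl _
  | cons h q ih =>
    intro hp
    rename_i a b c
    have hadj : (G.induce s).Adj ⟨a, hp a (Walk.start_mem_support _)⟩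
        ⟨b, hp b (by simp [Walk.support_cons])⟩ := by
      simp only [comap_adj, Function.Embedding.coe_subtype]
      exact h
    exact hadj.reachable.trans (ih (fun z hz => hp z (by simp [Walk.support_cons, hz])))

lemma connected_delete_of_reachable {a b : V} (hG : G.Connected)
    (h : (G \ fromEdgeSet {s(a, b)}).Reachable a b) :
    (G \ fromEdgeSet {s(a, b)}).Connected := by
  have key : ∀ {x y : V}, G.Adj x y → (G \ fromEdgeSet {s(a, b)}).Reachable x y := by
    intro x y hxy
    by_cases he : s(x, y) = s(a, b)
    · rw [Sym2.eq_iff] at he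
      rcases he with ⟨rfl, rfl⟩ | ⟨rfl, rfl⟩
      · exact h
      · exact h.symm
    · refine Adj.reachable ?_
      rw [sdiff_adj]
      refine ⟨hxy, ?_⟩
      rw [fromEdgeSet_adj]
      rintro ⟨hm, -⟩
      exact he (Set.mem_singleton_iff.1 hm)
  have hpre : (G \ fromEdgeSet {s(a, b)}).Preconnected := by
    intro x y
    obtain ⟨p⟩ := hG.preconnected x y
    induction p with
    | nil => exact Reachable.refl _
    | cons hadj q ih => exact (key hadj).trans ih
  have := hG.nonempty; exact Connected.mk hpre

lemma exists_spanning_tree_aux [Finite V] :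
    ∀ (k : ℕ) (G : SimpleGraph V), G.edgeSet.ncard ≤ k → G.Connected →
      ∃ T, T ≤ G ∧ T.IsTree := by
  intro k
  induction k with
  | zero =>
    intro G hk hG
    by_cases hac : G.IsAcyclic
    · exact ⟨G, le_refl G, ⟨hG, hac⟩⟩
    · exfalso
      rw [isAcyclic_iff_forall_edge_isBridge] at hac
      push_neg at hac
      obtain ⟨e, he, -⟩ := hac
      have : G.edgeSet = ∅ := by
        rw [← Set.ncard_eq_zero (Set.toFinite _)]
        omega
      rw [this] at he
      exact he
  | succ k ih =>
    intro G hk hG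
    by_cases hac : G.IsAcyclic
    · exact ⟨G, le_refl G, ⟨hG, hac⟩⟩
    · rw [isAcyclic_iff_forall_edge_isBridge] at hac
      push_neg at hac
      obtain ⟨e, he, hnb⟩ := hac
      induction e using Sym2.ind with
      | _ a b =>
      rw [isBridge_iff] at hnb
      rw [mem_edgeSet] at he
      push_neg at hnb
      have hre : (G \ fromEdgeSet {s(a, b)}).Reachable a b := hnb
      have hG' := connected_delete_of_reachable hG hre
      have hle : G \ fromEdgeSet {s(a, b)} ≤ G := sdiff_le
      have hss : (G \ fromEdgeSet {s(a, b)}).edgeSet ⊂ G.edgeSet := by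
        refine ⟨edgeSet_mono hle, fun hsub => ?_⟩
        have : (G \ fromEdgeSet {s(a, b)}).Adj a b := by
          rw [← mem_edgeSet]; exact hsub ((mem_edgeSet G).2 he)
        rw [sdiff_adj, fromEdgeSet_adj] at this
        exact this.2 ⟨Set.mem_singleton _, he.ne⟩
      have hcard : (G \ fromEdgeSet {s(a, b)}).edgeSet.ncard < G.edgeSet.ncard :=
        Set.ncard_lt_ncard hss (Set.toFinite _)
      obtain ⟨T, hT, hTree⟩ := ih (G \ fromEdgeSet {s(a, b)}) (by omega) hG'
      exact ⟨T, hT.trans hle, hTree⟩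

lemma exists_spanning_tree [Finite V] (G : SimpleGraph V) (hG : G.Connected) :
    ∃ T, T ≤ G ∧ T.IsTree :=
  exists_spanning_tree_aux G.edgeSet.ncard G le_rfl hG

lemma mem_support_of_mem_edge {u w x : V} (p : G.Walk u w) {e : Sym2 V}
    (he : e ∈ p.edges) (hx : x ∈ e) : x ∈ p.support := by
  induction e using Sym2.ind with
  | _ c d =>
    rw [Sym2.mem_iff] at hx
    rcases hx with rfl | rfl
    · exact p.fst_mem_support_of_mem_edges he
    · exact p.snd_mem_support_of_mem_edges he

lemma upper_bound {V : Type*} [Fintype V] (G : SimpleGraph V) (hG : G.Connected)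
    (hn : 3 < Fintype.card V)
    (hcut : ∃ v : V, ¬ (G.induce ({v}ᶜ : Set V)).Connected)
    (ce : Sym2 V → ℕ) (cv : V → ℕ) (htmc : IsTMCColoring G ce cv) :
    colorsUsed G ce cv + Fintype.card V ≤ G.edgeSet.ncard + 2 + maxLeaves G := by
  classical
  obtain ⟨v, hv⟩ := hcut
  set c₀ := cv v with hc₀def
  -- the complement of v is nonempty
  obtain ⟨u₁, hu₁⟩ := Fintype.exists_ne_of_one_lt_card (by omega) v
  have hnecompl : Nonempty (({v}ᶜ : Set V)) := ⟨⟨u₁, Set.mem_compl_singleton_iff.2 hu₁⟩⟩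
  rw [connected_iff] at hv
  push_neg at hv
  have hnp : ¬ (G.induce ({v}ᶜ : Set V)).Preconnected := fun h => (hv h).false hnecompl.some
  rw [Preconnected] at hnp
  push_neg at hnp
  obtain ⟨a, b, hab⟩ := hnp
  -- crossing paths
  have cross : ∀ (u w : ({v}ᶜ : Set V)),
      (G.induce ({v}ᶜ : Set V)).Reachable u a → ¬ (G.induce ({v}ᶜ : Set V)).Reachable w a →
      ∃ p : G.Walk ↑u ↑w, p.IsPath ∧ (∀ e ∈ p.edges, ce e = c₀) ∧
        (∀ x ∈ p.support, x ≠ ↑u → x ≠ ↑w → cv x = c₀) ∧ v ∈ p.support ∧ (↑u : V) ≠ ↑w := by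
    rintro ⟨u, hu'⟩ ⟨w, hw'⟩ hu hw
    have hne : u ≠ w := by
      rintro rfl
      exact hw hu
    obtain ⟨p, hp, hmono⟩ := htmc u w hne
    obtain ⟨c, hce', hcv'⟩ := hmono
    have hvmem : v ∈ p.support := by
      by_contra hvs
      have hall : ∀ z ∈ p.support, z ∈ ({v}ᶜ : Set V) := by
        intro z hz
        rw [Set.mem_compl_singleton_iff]
        rintro rfl
        exact hvs hz
      have h3 := lift_reach p hall
      exact hw (h3.symm.trans hu)
    have huv : u ≠ v := Set.mem_compl_singleton_iff.1 hu'
    have hwv : w ≠ v := Set.mem_compl_singleton_iff.1 hw'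
    have hint : v ∈ p.support.tail.dropLast :=
      mem_internal_of p hvmem (Ne.symm huv) (Ne.symm hwv)
    have hcc : c = c₀ := (hcv' v hint).symm
    refine ⟨p, hp, fun e he => (hce' e he).trans hcc, ?_, hvmem, hne⟩
    intro x hx hxu hxw
    exact (hcv' x (mem_internal_of p hx hxu hxw)).trans hcc
  -- for every vertex other than v, a c₀-path starting at it and passing through v
  have pick : ∀ x : V, x ≠ v → ∃ (w : V) (p : G.Walk x w), p.IsPath ∧
      (∀ e ∈ p.edges, ce e = c₀) ∧ (∀ z ∈ p.support, z ≠ x → z ≠ w → cv z = c₀) ∧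
      v ∈ p.support ∧ x ≠ w ∧ w ≠ v := by
    intro x hx
    have hx' : x ∈ ({v}ᶜ : Set V) := Set.mem_compl_singleton_iff.2 hx
    by_cases hside : (G.induce ({v}ᶜ : Set V)).Reachable ⟨x, hx'⟩ a
    · obtain ⟨p, hp, hce', hcv', hvm, hne⟩ := cross ⟨x, hx'⟩ b hside (fun h => hab h.symm)
      exact ⟨↑b, p, hp, hce', hcv', hvm, hne, Set.mem_compl_singleton_iff.1 b.2⟩
    · obtain ⟨p, hp, hce', hcv', hvm, hne⟩ := cross a ⟨x, hx'⟩ (Reachable.refl a) hside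
      refine ⟨↑a, p.reverse, hp.reverse, ?_, ?_, ?_, ?_, Set.mem_compl_singleton_iff.1 a.2⟩
      · intro e he
        rw [Walk.edges_reverse, List.mem_reverse] at he
        exact hce' e he
      · intro z hz hz1 hz2
        rw [Walk.support_reverse, List.mem_reverse] at hz
        exact hcv' z hz hz2 hz1
      · rw [Walk.support_reverse, List.mem_reverse]
        exact hvm
      · exact fun h => hne h.symm
  -- P1 : the c₀-colored subgraph K is connected
  set E₀ : Set (Sym2 V) := {e | e ∈ G.edgeSet ∧ ce e = c₀} with hE₀def
  set K : SimpleGraph V := fromEdgeSet E₀ with hKdef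
  have hKedges : ∀ {x w : V} (p : G.Walk x w), (∀ e ∈ p.edges, ce e = c₀) →
      ∀ e ∈ p.edges, e ∈ K.edgeSet := by
    intro x w p hc e he
    rw [hKdef, edgeSet_fromEdgeSet]
    exact ⟨⟨p.edges_subset_edgeSet he, hc e he⟩,
      G.not_isDiag_of_mem_edgeSet (p.edges_subset_edgeSet he)⟩
  have P1 : ∀ x : V, x ≠ v → K.Reachable x v := by
    intro x hx
    obtain ⟨w, p, hp, hce', -, hvm, -, -⟩ := pick x hx
    have hq : v ∈ (p.transfer K (hKedges p hce')).support := by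
      rw [Walk.support_transfer]
      exact hvm
    exact ((p.transfer K (hKedges p hce')).takeUntil v hq).reachable
  have hKconn : K.Connected := by
    have hxv : ∀ x : V, K.Reachable x v := by
      intro x
      by_cases hx : x = v
      · exact hx ▸ Reachable.refl x
      · exact P1 x hx
    have := hG.nonempty
    exact Connected.mk (fun x y => (hxv x).trans (hxv y).symm)
  -- P2 : vertices colored c₀ reach v through c₀-colored vertices
  have P2 : ∀ x : V, x ≠ v → cv x = c₀ → ∃ p : G.Walk x v, ∀ z ∈ p.support, cv z = c₀ := by
    intro x hx hcvx
    obtain ⟨w, p, hp, -, hcv', hvm, hxw, hwv⟩ := pick x hx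
    refine ⟨p.takeUntil v hvm, ?_⟩
    intro z hz
    have hzp : z ∈ p.support := p.support_takeUntil_subset hvm hz
    by_cases hz1 : z = x
    · exact hz1 ▸ hcvx
    by_cases hz2 : z = w
    · exfalso
      have hnd := hp.support_nodup
      rw [← Walk.take_spec p hvm, Walk.support_append] at hnd
      have hwmem : w ∈ (p.dropUntil v hvm).support.tail :=
        Walk.end_mem_tail_support_of_ne (Ne.symm hwv) _
      exact (List.disjoint_of_nodup_append hnd) hz (hz2 ▸ hwmem)
    exact hcv' z hzp hz1 hz2
  -- P3 : vertices not colored c₀ have a neighbor colored c₀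
  have P3 : ∀ x : V, ∃ y : V, cv x ≠ c₀ → G.Adj x y ∧ cv y = c₀ := by
    intro x
    by_cases hcvx : cv x = c₀
    · exact ⟨v, fun h => absurd hcvx h⟩
    have hx : x ≠ v := by rintro rfl; exact hcvx rfl
    obtain ⟨w, p, hp, -, hcv', hvm, hxw, hwv⟩ := pick x hx
    obtain ⟨y, hadj, q, rfl⟩ := Walk.exists_eq_cons_of_ne hxw p
    have hyw : y ≠ w := by
      rintro rfl
      have : q = Walk.nil := Walk.isPath_iff_eq_nil.1 (hp.of_cons)
      rw [this] at hvm
      simp only [Walk.support_cons, Walk.support_nil, List.mem_cons,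
        List.mem_singleton, List.not_mem_nil, or_false] at hvm
      rcases hvm with h | h
      · exact hx h.symm
      · exact hwv h.symm
    have hyx : y ≠ x := hadj.ne'
    have hy : y ∈ (Walk.cons hadj q).support := by
      simp [Walk.support_cons]
    exact ⟨y, fun _ => ⟨hadj, hcv' y hy hyx hyw⟩⟩
  choose nx hnx using P3
  -- the auxiliary spanning connected subgraph H
  set S₂ : Set (Sym2 V) := {e | ∃ x : V, cv x ≠ c₀ ∧ e = s(x, nx x)} with hS₂def
  set S₁ : Set (Sym2 V) := {e | e ∈ G.edgeSet ∧ ∀ z ∈ e, cv z = c₀} with hS₁def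
  set H : SimpleGraph V := fromEdgeSet (S₁ ∪ S₂) with hHdef
  have hHG : H ≤ G := by
    intro x y hxy
    rw [hHdef, fromEdgeSet_adj] at hxy
    obtain ⟨hm, hne⟩ := hxy
    rcases hm with h | h
    · exact (mem_edgeSet G).1 h.1
    · obtain ⟨z, hz, heq⟩ := h
      rw [Sym2.eq_iff] at heq
      rcases heq with ⟨h1, h2⟩ | ⟨h1, h2⟩
      · rw [h1, h2]; exact (hnx z hz).1
      · rw [h1, h2]; exact (hnx z hz).1.symm
  have reachJ : ∀ y : V, cv y = c₀ → H.Reachable y v := by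
    intro y hy
    by_cases hyv : y = v
    · exact hyv ▸ Reachable.refl y
    obtain ⟨p, hps⟩ := P2 y hyv hy
    have hpe : ∀ e ∈ p.edges, e ∈ H.edgeSet := by
      intro e he
      rw [hHdef, edgeSet_fromEdgeSet]
      refine ⟨Or.inl ⟨p.edges_subset_edgeSet he, ?_⟩,
        G.not_isDiag_of_mem_edgeSet (p.edges_subset_edgeSet he)⟩
      intro z hz
      exact hps z (mem_support_of_mem_edge p he hz)
    exact (p.transfer H hpe).reachable
  have hHconn : H.Connected := by
    have hxv : ∀ x : V, H.Reachable x v := by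
      intro x
      by_cases hx : cv x = c₀
      · exact reachJ x hx
      · have hadj : H.Adj x (nx x) := by
          rw [hHdef, fromEdgeSet_adj]
          exact ⟨Or.inr ⟨x, hx, rfl⟩, (hnx x hx).1.ne⟩
        exact hadj.reachable.trans (reachJ (nx x) (hnx x hx).2)
    have := hG.nonempty
    exact Connected.mk (fun x y => (hxv x).trans (hxv y).symm)
  have hHdeg : ∀ x : V, cv x ≠ c₀ → H.neighborSet x = {nx x} := by
    intro x hx
    ext y
    simp only [mem_neighborSet, Set.mem_singleton_iff]
    constructor
    · intro hadj
      rw [hHdef, fromEdgeSet_adj] at hadj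
      obtain ⟨hm, -⟩ := hadj
      rcases hm with h | h
      · exact absurd (h.2 x (Sym2.mem_mk_left x y)) hx
      · obtain ⟨z, hz, heq⟩ := h
        rw [Sym2.eq_iff] at heq
        rcases heq with ⟨h1, h2⟩ | ⟨h1, h2⟩
        · rw [h2, ← h1]
        · exact absurd (by rw [h1]; exact (hnx z hz).2) hx
    · rintro rfl
      rw [hHdef, fromEdgeSet_adj]
      exact ⟨Or.inr ⟨x, hx, rfl⟩, (hnx x hx).1.ne⟩
  -- spanning tree of H : all non-c₀ vertices are leaves
  obtain ⟨T, hTH, hTtree⟩ := exists_spanning_tree H hHconn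
  have hTleaf : ∀ x : V, cv x ≠ c₀ → (T.neighborSet x).ncard = 1 := by
    intro x hx
    have hsub : T.neighborSet x ⊆ {nx x} := by
      intro y hy
      rw [← hHdeg x hx]
      exact hTH hy
    have hmem : ∃ y, y ∈ T.neighborSet x := by
      obtain ⟨z, hz⟩ := Fintype.exists_ne_of_one_lt_card (by omega) x
      obtain ⟨p⟩ := hTtree.isConnected.preconnected x z
      obtain ⟨y, hadj, -, -⟩ := Walk.exists_eq_cons_of_ne (Ne.symm hz) p
      exact ⟨y, hadj⟩
    obtain ⟨y, hy⟩ := hmem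
    have : T.neighborSet x = {nx x} :=
      Set.eq_singleton_iff_unique_mem.2 ⟨by rw [← hsub hy]; exact hy, fun z hz => hsub hz⟩
    rw [this, Set.ncard_singleton]
  have hLle : {x : V | cv x ≠ c₀}.ncard ≤ numLeaves T := by
    refine Set.ncard_le_ncard ?_ (Set.toFinite _)
    intro x hx
    exact hTleaf x hx
  have hTml : numLeaves T ≤ maxLeaves G := by
    refine le_csSup ⟨Fintype.card V, ?_⟩ ⟨T, hTH.trans hHG, hTtree, rfl⟩
    rintro k ⟨T', -, -, rfl⟩
    calc numLeaves T' ≤ (Set.univ : Set V).ncard :=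
          Set.ncard_le_ncard (Set.subset_univ _) Set.finite_univ
      _ = Fintype.card V := by rw [Set.ncard_univ, Nat.card_eq_fintype_card]
  -- spanning tree of K : at least n - 1 edges have color c₀
  obtain ⟨T', hT'K, hT'tree⟩ := exists_spanning_tree K hKconn
  have hT'E : T'.edgeSet ⊆ E₀ := by
    refine (edgeSet_mono hT'K).trans ?_
    rw [hKdef, edgeSet_fromEdgeSet]
    exact Set.diff_subset
  haveI : Fintype T'.edgeSet := Fintype.ofFinite _
  have hT'card : T'.edgeSet.ncard + 1 = Fintype.card V := by
    have h := hT'tree.card_edgeFinset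
    rwa [← Set.ncard_coe_finset, coe_edgeFinset] at h
  have hE₀ge : Fintype.card V ≤ E₀.ncard + 1 := by
    have := Set.ncard_le_ncard hT'E (Set.toFinite _)
    omega
  have hc₀mem : c₀ ∈ ce '' G.edgeSet := by
    have hne : T'.edgeSet.Nonempty := by
      apply Set.nonempty_of_ncard_ne_zero
      omega
    obtain ⟨e, he⟩ := hne
    exact ⟨e, (hT'E he).1, (hT'E he).2⟩
  -- counting
  have key1 : (ce '' G.edgeSet).ncard + E₀.ncard ≤ G.edgeSet.ncard + 1 := by
    have hsub : ce '' G.edgeSet ⊆ ce '' (G.edgeSet \ E₀) ∪ {c₀} := by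
      rintro c ⟨e, he, rfl⟩
      by_cases hce : ce e = c₀
      · exact Or.inr (Set.mem_singleton_iff.2 hce)
      · exact Or.inl ⟨e, ⟨he, fun hE₀ => hce hE₀.2⟩, rfl⟩
    have h1 : (ce '' G.edgeSet).ncard ≤ (ce '' (G.edgeSet \ E₀)).ncard + 1 := by
      calc (ce '' G.edgeSet).ncard ≤ (ce '' (G.edgeSet \ E₀) ∪ {c₀}).ncard :=
            Set.ncard_le_ncard hsub (Set.Finite.union (Set.toFinite _) (Set.toFinite _))
        _ ≤ (ce '' (G.edgeSet \ E₀)).ncard + ({c₀} : Set ℕ).ncard := Set.ncard_union_le _ _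
        _ = (ce '' (G.edgeSet \ E₀)).ncard + 1 := by rw [Set.ncard_singleton]
    have h2 : (ce '' (G.edgeSet \ E₀)).ncard ≤ (G.edgeSet \ E₀).ncard :=
      Set.ncard_image_le (Set.toFinite _)
    have h3 : (G.edgeSet \ E₀).ncard + E₀.ncard = G.edgeSet.ncard :=
      Set.ncard_diff_add_ncard_of_subset (fun e he => he.1) (Set.toFinite _)
    omega
  have key2 : colorsUsed G ce cv ≤ (ce '' G.edgeSet).ncard + {x : V | cv x ≠ c₀}.ncard := by
    have hsub : ce '' G.edgeSet ∪ Set.range cv ⊆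
        ce '' G.edgeSet ∪ cv '' {x : V | cv x ≠ c₀} := by
      rintro c (hc | ⟨x, rfl⟩)
      · exact Or.inl hc
      · by_cases hx : cv x = c₀
        · exact Or.inl (hx ▸ hc₀mem)
        · exact Or.inr ⟨x, hx, rfl⟩
    calc colorsUsed G ce cv ≤ (ce '' G.edgeSet ∪ cv '' {x : V | cv x ≠ c₀}).ncard :=
          Set.ncard_le_ncard hsub (Set.Finite.union (Set.toFinite _) (Set.toFinite _))
      _ ≤ (ce '' G.edgeSet).ncard + (cv '' {x : V | cv x ≠ c₀}).ncard := Set.ncard_union_le _ _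
      _ ≤ (ce '' G.edgeSet).ncard + {x : V | cv x ≠ c₀}.ncard := by
          have := Set.ncard_image_le (s := {x : V | cv x ≠ c₀}) (f := cv) (Set.toFinite _)
          omega
  omega

lemma numLeaves_le_card {V : Type*} [Fintype V] (T : SimpleGraph V) :
    numLeaves T ≤ Fintype.card V := by
  calc numLeaves T ≤ (Set.univ : Set V).ncard :=
        Set.ncard_le_ncard (Set.subset_univ _) Set.finite_univ
    _ = Fintype.card V := by rw [Set.ncard_univ, Nat.card_eq_fintype_card]

lemma lower_bound {V : Type*} [Fintype V] (G : SimpleGraph V) (hG : G.Connected)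
    (hn : 3 < Fintype.card V) :
    ∃ ce cv, IsTMCColoring G ce cv ∧
      colorsUsed G ce cv + Fintype.card V = G.edgeSet.ncard + 2 + maxLeaves G := by
  classical
  -- an optimal spanning tree
  obtain ⟨T₀, hT₀, hTree₀⟩ := exists_spanning_tree G hG
  have hSlv_ne : {k | ∃ T : SimpleGraph V, T ≤ G ∧ T.IsTree ∧ numLeaves T = k}.Nonempty :=
    ⟨numLeaves T₀, T₀, hT₀, hTree₀, rfl⟩
  have hSlv_bdd : BddAbove {k | ∃ T : SimpleGraph V, T ≤ G ∧ T.IsTree ∧ numLeaves T = k} := by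
    refine ⟨Fintype.card V, ?_⟩
    rintro k ⟨T, -, -, rfl⟩
    exact numLeaves_le_card T
  have hmem : maxLeaves G ∈ {k | ∃ T : SimpleGraph V, T ≤ G ∧ T.IsTree ∧ numLeaves T = k} :=
    Nat.sSup_mem hSlv_ne hSlv_bdd
  obtain ⟨T, hTG, hTree, hl⟩ := hmem
  obtain ⟨fE, hfE⟩ := exists_injective_nat (Sym2 V)
  obtain ⟨fV, hfV⟩ := exists_injective_nat V
  set Lf : Set V := {x | (T.neighborSet x).ncard = 1} with hLfdef
  set ce : Sym2 V → ℕ := fun e => if e ∈ G.edgeSet \ T.edgeSet then 2 * fE e + 2 else 0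
    with hcedef
  set cv : V → ℕ := fun x => if x ∈ Lf then 2 * fV x + 1 else 0 with hcvdef
  have hET : T.edgeSet.ncard + 1 = Fintype.card V := by
    haveI : Fintype T.edgeSet := Fintype.ofFinite _
    have h := hTree.card_edgeFinset
    rwa [← Set.ncard_coe_finset, coe_edgeFinset] at h
  refine ⟨ce, cv, ?_, ?_⟩
  · -- TMC coloring
    intro u w hne
    obtain ⟨q, hq, -⟩ := hTree.existsUnique_path u w
    have hqe : ∀ e ∈ q.edges, e ∈ G.edgeSet :=
      fun e he => edgeSet_mono hTG (q.edges_subset_edgeSet he)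
    refine ⟨q.transfer G hqe, ?_, 0, ?_, ?_⟩
    · rw [Walk.isPath_def, Walk.support_transfer]
      exact hq.support_nodup
    · intro e he
      rw [Walk.edges_transfer] at he
      have : e ∈ T.edgeSet := q.edges_subset_edgeSet he
      rw [hcedef]
      simp only [Set.mem_diff]
      rw [if_neg (fun hd => hd.2 this)]
    · intro x hx
      rw [Walk.support_transfer] at hx
      have := internal_not_leaf hq hx
      rw [hcvdef]
      simp only [hLfdef, Set.mem_setOf_eq]
      rw [if_neg this]
  · -- color count
    have hU : ce '' G.edgeSet ∪ Set.range cv =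
        ({0} ∪ (fun e => 2 * fE e + 2) '' (G.edgeSet \ T.edgeSet)) ∪
          (fun x => 2 * fV x + 1) '' Lf := by
      apply Set.eq_of_subset_of_subset
      · rintro c (⟨e, he, rfl⟩ | ⟨x, rfl⟩)
        · by_cases hd : e ∈ G.edgeSet \ T.edgeSet
          · refine Or.inl (Or.inr ⟨e, hd, ?_⟩)
            rw [hcedef]; simp only; rw [if_pos hd]
          · refine Or.inl (Or.inl ?_)
            rw [hcedef]; simp only; rw [if_neg hd]; exact rfl
        · by_cases hx : x ∈ Lf
          · refine Or.inr ⟨x, hx, ?_⟩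
            rw [hcvdef]; simp only; rw [if_pos hx]
          · refine Or.inl (Or.inl ?_)
            rw [hcvdef]; simp only; rw [if_neg hx]; exact rfl
      · rintro c ((hc | ⟨e, he, rfl⟩) | ⟨x, hx, rfl⟩)
        · -- 0 is used : T has an edge
          have hTne : T.edgeSet.Nonempty := by
            apply Set.nonempty_of_ncard_ne_zero
            omega
          obtain ⟨e₀, he₀⟩ := hTne
          refine Or.inl ⟨e₀, edgeSet_mono hTG he₀, ?_⟩
          rw [Set.mem_singleton_iff.1 hc, hcedef]
          simp only
          rw [if_neg (fun hd => hd.2 he₀)]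
        · refine Or.inl ⟨e, he.1, ?_⟩
          rw [hcedef]; simp only; rw [if_pos he]
        · refine Or.inr ⟨x, ?_⟩
          rw [hcvdef]; simp only; rw [if_pos hx]
    have hinj2 : Function.Injective (fun e : Sym2 V => 2 * fE e + 2) := by
      intro e1 e2 h
      simp only at h
      exact hfE (by omega)
    have hinj3 : Function.Injective (fun x : V => 2 * fV x + 1) := by
      intro x1 x2 h
      simp only at h
      exact hfV (by omega)
    have hd1 : Disjoint ({0} : Set ℕ) ((fun e => 2 * fE e + 2) '' (G.edgeSet \ T.edgeSet)) := by
      rw [Set.disjoint_left]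
      rintro c hc ⟨e, -, rfl⟩
      simp only [Set.mem_singleton_iff] at hc
      omega
    have hd2 : Disjoint (({0} : Set ℕ) ∪ (fun e => 2 * fE e + 2) '' (G.edgeSet \ T.edgeSet))
        ((fun x => 2 * fV x + 1) '' Lf) := by
      rw [Set.disjoint_left]
      rintro c (hc | ⟨e, -, rfl⟩) ⟨x, -, hx⟩
      · simp only [Set.mem_singleton_iff] at hc
        simp only at hx
        omega
      · simp only at hx
        omega
    have hcount : colorsUsed G ce cv =
        1 + (G.edgeSet \ T.edgeSet).ncard + Lf.ncard := by
      rw [colorsUsed, hU, Set.ncard_union_eq hd2 (Set.Finite.union (Set.toFinite _)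
        (Set.toFinite _)) (Set.toFinite _),
        Set.ncard_union_eq hd1 (Set.toFinite _) (Set.toFinite _), Set.ncard_singleton,
        Set.ncard_image_of_injective _ hinj2, Set.ncard_image_of_injective _ hinj3]
    have hdiff : (G.edgeSet \ T.edgeSet).ncard + T.edgeSet.ncard = G.edgeSet.ncard :=
      Set.ncard_diff_add_ncard_of_subset (edgeSet_mono hTG) (Set.toFinite _)
    have hlf : Lf.ncard = numLeaves T := rfl
    rw [hcount]
    omega

end Helpers

theorem stmt7 {V : Type*} [Fintype V] (G : SimpleGraph V) (hG : G.Connected)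
    (hn : 3 < Fintype.card V)
    (hcut : ∃ v : V, ¬ (G.induce ({v}ᶜ : Set V)).Connected) :
    (tmc G : ℤ) = (G.edgeSet.ncard : ℤ) - (Fintype.card V : ℤ) + 2 + (maxLeaves G : ℤ) := by
  classical
  obtain ⟨ce₀, cv₀, htmc₀, hcount₀⟩ := lower_bound G hG hn
  have hSbdd : BddAbove {k | ∃ ce cv, IsTMCColoring G ce cv ∧ colorsUsed G ce cv = k} := by
    refine ⟨G.edgeSet.ncard + Fintype.card V, ?_⟩
    rintro k ⟨ce, cv, -, rfl⟩
    calc colorsUsed G ce cv ≤ (ce '' G.edgeSet).ncard + (Set.range cv).ncard :=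
          Set.ncard_union_le _ _
      _ ≤ G.edgeSet.ncard + Fintype.card V := by
          have h1 : (ce '' G.edgeSet).ncard ≤ G.edgeSet.ncard :=
            Set.ncard_image_le (Set.toFinite _)
          have h2 : (Set.range cv).ncard ≤ Fintype.card V := by
            rw [← Set.image_univ]
            calc (cv '' Set.univ).ncard ≤ (Set.univ : Set V).ncard :=
                  Set.ncard_image_le (Set.toFinite _)
              _ = Fintype.card V := by rw [Set.ncard_univ, Nat.card_eq_fintype_card]
          omega
  have hSne : {k | ∃ ce cv, IsTMCColoring G ce cv ∧ colorsUsed G ce cv = k}.Nonempty :=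
    ⟨colorsUsed G ce₀ cv₀, ce₀, cv₀, htmc₀, rfl⟩
  have htmem : tmc G ∈ {k | ∃ ce cv, IsTMCColoring G ce cv ∧ colorsUsed G ce cv = k} :=
    Nat.sSup_mem hSne hSbdd
  obtain ⟨ce, cv, htmcc, hc⟩ := htmem
  have h1 := upper_bound G hG hn hcut ce cv htmcc
  rw [hc] at h1
  have h2 : colorsUsed G ce₀ cv₀ ≤ tmc G :=
    le_csSup hSbdd ⟨ce₀, cv₀, htmc₀, rfl⟩
  omega
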